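/- There is no self-adjoint dephased complex Hadamard matrix H ∈ M₆(ℂ) whose diagonal is (1, −1, −1, −1, −1, 1). -/

import Mathlib

open Complex Matrix ComplexConjugate

/-- A complex Hadamard matrix of order `n`: all entries of absolute value 1
and pairwise orthogonal rows, i.e. `H Hᴴ = n·1`. -/
def IsHadamard {n : ℕ} (H : Matrix (Fin n) (Fin n) ℂ) : Prop :=
  (∀ i j, ‖H i j‖ = 1) ∧ H * Hᴴ = (n : ℂ) • 1

/-- A matrix is dephased if its first row and first column consist of 1's. -/
def IsDephased {n : ℕ} [NeZero n] (H : Matrix (Fin n) (Fin n) ℂ) : Prop :=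
  ∀ k, H 0 k = 1 ∧ H k 0 = 1

/-- There is no self-adjoint dephased complex Hadamard matrix in
M₆(ℂ) whose diagonal is (1, (-1), (-1), (-1), (-1), 1). -/
theorem no_selfAdjoint_dephased_diag_stmt11 :
    ¬ ∃ H : Matrix (Fin 6) (Fin 6) ℂ,
      _root_.IsHadamard H ∧ Hᴴ = H ∧ IsDephased H ∧
      H 0 0 = 1 ∧ H 1 1 = (-1) ∧ H 2 2 = (-1) ∧
      H 3 3 = (-1) ∧ H 4 4 = (-1) ∧ H 5 5 = 1 := by
  rintro ⟨H, ⟨habs, horth⟩, hherm, hdeph, h00, h11, h22, h33, h44, h55⟩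
  -- H is an involution up to scale: H * H = 6 • 1
  have hHH : H * H = (6 : ℂ) • 1 := by
    rw [hherm] at horth; simpa using horth
  set s : ℝ := Real.sqrt 6 with hs
  have hspos : (0:ℝ) < s := Real.sqrt_pos.mpr (by norm_num)
  have hs2 : (s : ℂ) * s = 6 := by
    norm_cast
    rw [Real.mul_self_sqrt (by norm_num : (0:ℝ) ≤ 6)]
  have hsne : (s : ℂ) ≠ 0 := by simpa using hspos.ne'
  -- The spectral projection P = H/(2√6) + 1/2 is idempotent
  set P : Matrix (Fin 6) (Fin 6) ℂ := (1/(2*s) : ℂ) • H + (1/2 : ℂ) • 1 with hP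
  have hidem : P * P = P := by
    rw [hP]
    simp only [Matrix.add_mul, Matrix.mul_add, Matrix.smul_mul, Matrix.mul_smul, hHH,
      Matrix.mul_one, Matrix.one_mul, smul_smul]
    match_scalars <;> field_simp
    all_goals first | ring1 | linear_combination (-8:ℂ) * hs2 | linear_combination (-1:ℂ) * hs2
  -- Hence the corresponding linear map is a projection
  set f : (Fin 6 → ℂ) →ₗ[ℂ] (Fin 6 → ℂ) := Matrix.toLin' P with hf
  have hff : ∀ x, f (f x) = f x := by
    intro x
    have : f ∘ₗ f = f := by
      rw [hf, ← Matrix.toLin'_mul, hidem]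
    exact DFunLike.congr_fun this x
  have hproj : LinearMap.IsProj (LinearMap.range f) f :=
    ⟨fun x => LinearMap.mem_range_self f x, by
      rintro x ⟨y, rfl⟩; exact hff y⟩
  -- Trace of a projection is its rank, a natural number
  have htr : LinearMap.trace ℂ (Fin 6 → ℂ) f
      = (Module.finrank ℂ (LinearMap.range f) : ℂ) := hproj.trace
  set r : ℕ := Module.finrank ℂ (LinearMap.range f) with hr
  -- Compute the trace of f
  have htrP : LinearMap.trace ℂ (Fin 6 → ℂ) f = Matrix.trace P := by
    rw [LinearMap.trace_eq_matrix_trace ℂ (Pi.basisFun ℂ (Fin 6)),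
      LinearMap.toMatrix_eq_toMatrix', hf, LinearMap.toMatrix'_toLin']
  have htrH : Matrix.trace H = (-2 : ℂ) := by
    simp [Matrix.trace, Matrix.diag, Fin.sum_univ_six, h00, h11, h22, h33, h44, h55]
    norm_num
  have htrP2 : Matrix.trace P = (1/(2*s) : ℂ) * (-2) + 3 := by
    rw [hP, Matrix.trace_add, Matrix.trace_smul, Matrix.trace_smul, htrH, Matrix.trace_one]
    simp [smul_eq_mul, Fintype.card_fin]
    field_simp
    ring
  -- Equate: (r : ℂ) = -1/√6 + 3
  have keyC : (r : ℂ) = 1/(2*(s:ℂ)) * (-2) + 3 := htr.symm.trans (htrP.trans htrP2)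
  have key : ((r : ℝ) : ℂ) = ((3 - 1/s : ℝ) : ℂ) := by
    push_cast
    rw [keyC]
    field_simp
    ring
  have keyR : (r : ℝ) = 3 - 1/s := Complex.ofReal_inj.mp key
  -- Contradiction with irrationality of √6
  have hsne' : s ≠ 0 := hspos.ne'
  have h6 : 6 * (3 - (r:ℝ))^2 = 1 := by
    have h1 : 1/s = 3 - (r:ℝ) := by linarith
    have h2 : s * (3 - (r:ℝ)) = 1 := by
      rw [← h1]; field_simp
    have h3 : s * s = 6 := Real.mul_self_sqrt (by norm_num)
    nlinarith [h2, h3]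
  rcases eq_or_ne r 3 with h | h
  · rw [h] at h6; norm_num at h6
  · have ht : (3 - (r:ℤ)) ≠ 0 := by
      intro hc
      apply h
      omega
    have ht1 : (1:ℤ) ≤ (3 - (r:ℤ))^2 := by
      have h1 := Int.one_le_abs ht
      nlinarith [_root_.sq_abs (3 - (r:ℤ)), h1]
    have ht2 : (1:ℝ) ≤ (3 - (r:ℝ))^2 := by exact_mod_cast ht1
    nlinarith [h6, ht2]
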